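/- Let e and f be orthogonal idempotents in a prime ring R such that the corner rings eRe and fRf are division rings. Then the corner ring (e+f)R(e+f) is isomorphic as a ring to the 2×2 matrix ring M_2(eRe). -/

import Mathlib

/-- The additive subgroup underlying the corner ring `eRe`. -/
def cornerAddSubgroup {R : Type*} [Ring R] (e : R) : AddSubgroup R where
  carrier := {x | e * x * e = x}
  add_mem' := by intro a b ha hb; simp only [Set.mem_setOf_eq] at *; rw [mul_add, add_mul, ha, hb]
  zero_mem' := by simp
  neg_mem' := by intro a ha; simp only [Set.mem_setOf_eq] at *; rw [mul_neg, neg_mul, ha]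

/-- The corner ring `eRe` associated with an idempotent `e` of a ring `R`:
its elements are the `x ∈ R` with `e * x * e = x`. -/
def Corner {R : Type*} [Ring R] (e : R) (_he : e * e = e) : Type _ :=
  cornerAddSubgroup e

namespace Corner

variable {R : Type*} [Ring R] {e : R} {he : e * e = e}

theorem prop (a : Corner e he) : e * a.1 * e = a.1 := a.2

instance : AddCommGroup (Corner e he) :=
  inferInstanceAs (AddCommGroup (cornerAddSubgroup e))

theorem left_absorb (a : Corner e he) : e * a.1 = a.1 := by
  conv_lhs => rw [← prop a]
  rw [← mul_assoc, ← mul_assoc, he, prop a]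

theorem right_absorb (a : Corner e he) : a.1 * e = a.1 := by
  conv_lhs => rw [← prop a]
  rw [mul_assoc, mul_assoc, he, ← mul_assoc, prop a]

instance instRing : Ring (Corner e he) :=
  { (inferInstanceAs (AddCommGroup (Corner e he)) : AddCommGroup (Corner e he)) with
    mul := fun a b => ⟨a.1 * b.1, by
      show e * (a.1 * b.1) * e = a.1 * b.1
      rw [mul_assoc, mul_assoc, right_absorb b, ← mul_assoc, left_absorb a]⟩
    one := ⟨e, by show e * e * e = e; rw [he, he]⟩
    mul_assoc := fun a b c => Subtype.ext (mul_assoc a.1 b.1 c.1)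
    one_mul := fun a => Subtype.ext (left_absorb a)
    mul_one := fun a => Subtype.ext (right_absorb a)
    left_distrib := fun a b c => Subtype.ext (mul_add a.1 b.1 c.1)
    right_distrib := fun a b c => Subtype.ext (add_mul a.1 b.1 c.1)
    zero_mul := fun a => Subtype.ext (zero_mul a.1)
    mul_zero := fun a => Subtype.ext (mul_zero a.1) }

@[simp] theorem val_mul (a b : Corner e he) : (a * b).1 = a.1 * b.1 := rfl
@[simp] theorem val_add (a b : Corner e he) : (a + b).1 = a.1 + b.1 := rfl
@[simp] theorem val_one : (1 : Corner e he).1 = e := rfl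
@[simp] theorem val_zero : (0 : Corner e he).1 = 0 := rfl

end Corner

private theorem massoc {R : Type*} [Ring R] (a b x c d : R) :
    a * (b * x * c) * d = a * b * x * (c * d) := by
  simp only [mul_assoc]

/-- Given "matrix units" data `e, f, u, v`, the corner ring of `e + f` is isomorphic
to 2×2 matrices over the corner ring of `e`. -/
private theorem corner_units_equiv {R : Type*} [Ring R] (e f u v : R)
    (he : e * e = e) (hef : e * f = 0) (hfe : f * e = 0)
    (heu : e * u = u) (huf : u * f = u) (hfv : f * v = v) (hve : v * e = v)
    (huv : u * v = e) (hvu : v * u = f) (hev : e * v = 0) (hue : u * e = 0)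
    (hg : (e + f) * (e + f) = e + f) :
    Nonempty (Corner (e + f) hg ≃+* Matrix (Fin 2) (Fin 2) (Corner e he)) := by
  have hge : (e + f) * e = e := by rw [add_mul, he, hfe, add_zero]
  have hgv : (e + f) * v = v := by rw [add_mul, hev, hfv, zero_add]
  have heg : e * (e + f) = e := by rw [mul_add, he, hef, add_zero]
  have hug : u * (e + f) = u := by rw [mul_add, hue, huf, zero_add]
  have her : ∀ i : Fin 2, e * ![e, u] i = ![e, u] i := by
    intro i; fin_cases i <;> simp [he, heu]
  have hce : ∀ j : Fin 2, ![e, v] j * e = ![e, v] j := by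
    intro j; fin_cases j <;> simp [he, hve]
  have he' : ∀ z : R, e * (e * z) = e * z := fun z => by rw [← mul_assoc, he]
  have hvu' : ∀ z : R, v * (u * z) = f * z := fun z => by rw [← mul_assoc, hvu]
  refine ⟨{
    toFun := fun z => Matrix.of fun i j =>
      ⟨![e, u] i * z.1 * ![e, v] j, by
        show e * (![e, u] i * z.1 * ![e, v] j) * e = _
        rw [massoc, her, hce]⟩
    invFun := fun M =>
      ⟨e * (M 0 0).1 * e + e * (M 0 1).1 * u + v * (M 1 0).1 * e + v * (M 1 1).1 * u, by
        refine add_mem (add_mem (add_mem ?_ ?_) ?_) ?_ <;>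
          · show (e + f) * _ * (e + f) = _
            rw [massoc]
            simp only [hge, hgv, heg, hug]⟩
    left_inv := fun z => by
      apply Subtype.ext
      have h := Corner.prop z
      rw [add_mul, add_mul, mul_add, mul_add] at h
      simp only [Matrix.of_apply, Matrix.cons_val', Matrix.cons_val_zero, Matrix.cons_val_one,
        Matrix.head_cons, Matrix.head_fin_const, Matrix.empty_val', Matrix.cons_val_fin_one]
      erw [Matrix.of_apply, Matrix.of_apply, Matrix.of_apply, Matrix.of_apply]
      simp only [Matrix.cons_val', Matrix.cons_val_zero, Matrix.cons_val_one, Matrix.head_cons,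
        Matrix.head_fin_const, Matrix.empty_val', Matrix.cons_val_fin_one]
      simp only [massoc, he, hvu]
      rw [add_assoc]
      exact h
    right_inv := fun M => by
      ext i j
      apply Subtype.ext
      fin_cases i <;> fin_cases j <;>
        · simp only [Fin.zero_eta, Fin.mk_one, Fin.isValue, Matrix.of_apply, Matrix.cons_val',
            Matrix.cons_val_zero, Matrix.cons_val_one, Matrix.head_cons, Matrix.head_fin_const,
            Matrix.empty_val', Matrix.cons_val_fin_one]
          erw [Matrix.of_apply]
          simp only [Matrix.cons_val', Matrix.cons_val_zero, Matrix.cons_val_one, Matrix.head_cons,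
            Matrix.head_fin_const, Matrix.empty_val', Matrix.cons_val_fin_one]
          simp only [mul_add, add_mul, massoc]
          simp only [he, huv, hev, hue, zero_mul, mul_zero, add_zero, zero_add, Corner.prop]
    map_mul' := fun x y => by
      ext i j
      apply Subtype.ext
      have habs : e * (y.1 * ![e, v] j) + f * (y.1 * ![e, v] j) = y.1 * ![e, v] j := by
        rw [← add_mul, ← mul_assoc, Corner.left_absorb]
      simp only [Matrix.mul_apply, Fin.sum_univ_two, Corner.val_add, Corner.val_mul,
        Matrix.of_apply, Matrix.cons_val_zero, Matrix.cons_val_one, Matrix.head_cons]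
      erw [Matrix.of_apply, Matrix.of_apply, Matrix.of_apply, Matrix.of_apply, Matrix.of_apply]
      simp only [Matrix.cons_val_zero, Matrix.cons_val_one, Matrix.head_cons]
      simp only [mul_assoc]
      rw [he', hvu', ← mul_add, ← mul_add, habs]
    map_add' := fun x y => by
      ext i j
      apply Subtype.ext
      simp only [Matrix.add_apply, Matrix.of_apply, Corner.val_add, mul_add, add_mul]
      erw [Matrix.of_apply, Matrix.of_apply, Matrix.of_apply] }⟩

/-- Let `e` and `f` be orthogonal idempotents in a prime ring `R` such that the corner
rings `eRe` and `fRf` are division rings (they are nonzero and every nonzero element has a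
two-sided inverse with respect to the respective unity).  Then the corner ring
`(e+f)R(e+f)` is isomorphic as a ring to `M₂(eRe)`. -/
theorem corner_add_ringEquiv_matrix (R : Type*) [Ring R]
    (hprime : ∀ a b : R, (∀ x : R, a * x * b = 0) → a = 0 ∨ b = 0)
    (e f : R) (he : e * e = e) (hf : f * f = f) (hef : e * f = 0) (hfe : f * e = 0)
    (hene : e ≠ 0) (hfne : f ≠ 0)
    (heD : ∀ x : R, e * x * e = x → x ≠ 0 → ∃ y : R, e * y * e = y ∧ x * y = e ∧ y * x = e)
    (hfD : ∀ x : R, f * x * f = x → x ≠ 0 → ∃ y : R, f * y * f = y ∧ x * y = f ∧ y * x = f) :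
    Nonempty (Corner (e + f)
        (by rw [add_mul, mul_add, mul_add, he, hf, hef, hfe, add_zero, zero_add])
      ≃+* Matrix (Fin 2) (Fin 2) (Corner e he)) := by
  -- Step 1: find a nonzero `u ∈ eRf`.
  obtain ⟨a, ha⟩ : ∃ a : R, e * a * f ≠ 0 := by
    by_contra h
    push_neg at h
    rcases hprime e f h with h' | h'
    · exact hene h'
    · exact hfne h'
  obtain ⟨u, hu_def⟩ : ∃ u : R, u = e * a * f := ⟨_, rfl⟩
  rw [← hu_def] at ha
  have heu : e * u = u := by rw [hu_def, ← mul_assoc, ← mul_assoc, he]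
  have huf : u * f = u := by rw [hu_def, mul_assoc, hf]
  -- Step 2: by primeness, `u x u ≠ 0` for some `x`.
  obtain ⟨x0, hx0⟩ : ∃ x0 : R, u * x0 * u ≠ 0 := by
    by_contra h
    push_neg at h
    rcases hprime u u h with h' | h' <;> exact ha h'
  obtain ⟨w, hw_def⟩ : ∃ w : R, w = f * x0 * e := ⟨_, rfl⟩
  have hwe : w * e = w := by rw [hw_def, mul_assoc, he]
  have hfw : f * w = w := by rw [hw_def, ← mul_assoc, ← mul_assoc, hf]
  have huw_corner : e * (u * w) * e = u * w := by
    rw [← mul_assoc, heu, mul_assoc, hwe]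
  have huw_ne : u * w ≠ 0 := by
    intro h0
    apply hx0
    have h1 : u * w * u = u * x0 * u := by
      rw [hw_def, massoc, huf, heu]
    rw [← h1, h0, zero_mul]
  -- Step 3: invert `u * w` in `eRe` and set `v := w * t`.
  obtain ⟨t, hte, hut, htu⟩ := heD (u * w) huw_corner huw_ne
  have hte' : t * e = t := by rw [← hte, mul_assoc, he]
  obtain ⟨v, hv_def⟩ : ∃ v : R, v = w * t := ⟨_, rfl⟩
  have huv : u * v = e := by rw [hv_def, ← mul_assoc]; exact hut
  have hve : v * e = v := by rw [hv_def, mul_assoc, hte']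
  have hfv : f * v = v := by rw [hv_def, ← mul_assoc, hfw]
  have hev : e * v = 0 := by rw [← hfv, ← mul_assoc, hef, zero_mul]
  have hue : u * e = 0 := by rw [← huf, mul_assoc, hfe, mul_zero]
  -- Step 4: show `v * u = f` using that `fRf` is a division ring.
  have hs_corner : f * (v * u) * f = v * u := by
    rw [← mul_assoc, hfv, mul_assoc, huf]
  have hs_ne : v * u ≠ 0 := by
    intro h0
    apply ha
    show u = 0
    calc u = u * (v * u) := by rw [← mul_assoc, huv, heu]
    _ = 0 := by rw [h0, mul_zero]
  obtain ⟨y, -, hsy, -⟩ := hfD (v * u) hs_corner hs_ne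
  have hidem : v * u * (v * u) = v * u := by
    rw [mul_assoc v u, ← mul_assoc u v u, huv, heu]
  have hvu : v * u = f := by
    calc v * u = v * u * f := by rw [mul_assoc, huf]
    _ = v * u * (v * u * y) := by rw [← hsy]
    _ = v * u * (v * u) * y := by rw [← mul_assoc]
    _ = v * u * y := by rw [hidem]
    _ = f := hsy
  exact corner_units_equiv e f u v he hef hfe heu huf hfv hve huv hvu hev hue
    (by rw [add_mul, mul_add, mul_add, he, hf, hef, hfe, add_zero, zero_add])
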